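/- There exist constants C₁ > 0 and C₂ > 0 such that for every real δ with 0 ≤ δ < C₁ and every matrix A ∈ SL(2,ℝ) with ‖A − I‖∞ ≤ δ, there exist real numbers t, y, θ with |t| ≤ C₂δ, |y| ≤ C₂δ, |θ| ≤ C₂δ and A = n(t)·a(y)·K(θ). -/

import Mathlib

open Real Matrix

/-- `n t = [[1, t], [0, 1]]`. -/
noncomputable def n (t : ℝ) : Matrix (Fin 2) (Fin 2) ℝ := !![1, t; 0, 1]

/-- `a y = [[e^{y/2}, 0], [0, e^{-y/2}]]`. -/
noncomputable def a (y : ℝ) : Matrix (Fin 2) (Fin 2) ℝ :=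
  !![Real.exp (y / 2), 0; 0, Real.exp (-y / 2)]

/-- `K θ = [[cos θ, sin θ], [-sin θ, cos θ]]`. -/
noncomputable def K (θ : ℝ) : Matrix (Fin 2) (Fin 2) ℝ :=
  !![Real.cos θ, Real.sin θ; -Real.sin θ, Real.cos θ]

/-- The maximum of the absolute values of the entries of a real 2×2 matrix. -/
noncomputable def mnorm (M : Matrix (Fin 2) (Fin 2) ℝ) : ℝ :=
  max (max |M 0 0| |M 0 1|) (max |M 1 0| |M 1 1|)

lemma abs_arctan_le (x : ℝ) : |Real.arctan x| ≤ |x| := by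
  have key : ∀ z : ℝ, 0 ≤ z → Real.arctan z ≤ z := by
    intro z hz
    rcases eq_or_lt_of_le hz with h | h
    · simp [← h]
    · have h1 : 0 < Real.arctan z := by
        have := Real.arctan_strictMono h
        simpa [Real.arctan_zero] using this
      have h2 := Real.lt_tan h1 (Real.arctan_lt_pi_div_two z)
      rw [Real.tan_arctan] at h2
      exact h2.le
  rcases le_or_gt 0 x with h | h
  · rw [abs_of_nonneg h, abs_of_nonneg (by have := Real.arctan_strictMono.monotone h; simpa [Real.arctan_zero] using this)]
    exact key x h
  · rw [abs_of_neg h, abs_of_neg (by have := Real.arctan_strictMono h; simpa [Real.arctan_zero] using this)]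
    have := key (-x) (by linarith)
    rw [Real.arctan_neg] at this
    linarith

set_option maxHeartbeats 1000000 in
theorem stmt0 :
    ∃ C₁ > (0 : ℝ), ∃ C₂ > (0 : ℝ), ∀ δ : ℝ, 0 ≤ δ → δ < C₁ →
      ∀ A : Matrix (Fin 2) (Fin 2) ℝ, A.det = 1 → mnorm (A - 1) ≤ δ →
        ∃ t y θ : ℝ, |t| ≤ C₂ * δ ∧ |y| ≤ C₂ * δ ∧ |θ| ≤ C₂ * δ ∧
          A = n t * a y * K θ := by
  refine ⟨1/10, by norm_num, 4, by norm_num, ?_⟩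
  intro δ hδ0 hδ1 A hdet hnorm
  set p := A 0 0 with hp
  set q := A 0 1 with hq
  set c := A 1 0 with hc
  set d := A 1 1 with hd
  have hA : A = !![p, q; c, d] := by
    ext i j; fin_cases i <;> fin_cases j <;> rfl
  have hdet' : p * d - q * c = 1 := by
    rw [Matrix.det_fin_two] at hdet; exact hdet
  -- entry bounds
  have h00 : |p - 1| ≤ δ := by
    refine le_trans ?_ hnorm
    have : (A - 1) 0 0 = p - 1 := by simp [Matrix.sub_apply, Matrix.one_apply, hp]
    rw [mnorm, ← this]
    exact le_max_of_le_left (le_max_left _ _)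
  have h01 : |q| ≤ δ := by
    refine le_trans ?_ hnorm
    have : (A - 1) 0 1 = q := by simp [Matrix.sub_apply, Matrix.one_apply, hq]
    rw [mnorm, ← this]
    exact le_max_of_le_left (le_max_right _ _)
  have h10 : |c| ≤ δ := by
    refine le_trans ?_ hnorm
    have : (A - 1) 1 0 = c := by simp [Matrix.sub_apply, Matrix.one_apply, hc]
    rw [mnorm, ← this]
    exact le_max_of_le_right (le_max_left _ _)
  have h11 : |d - 1| ≤ δ := by
    refine le_trans ?_ hnorm
    have : (A - 1) 1 1 = d - 1 := by simp [Matrix.sub_apply, Matrix.one_apply, hd]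
    rw [mnorm, ← this]
    exact le_max_of_le_right (le_max_right _ _)
  have hδ : δ < 1/10 := hδ1
  clear_value p q c d
  clear hnorm hdet hp hq hc hd
  obtain ⟨hp1, hp2⟩ := abs_le.1 h00
  obtain ⟨hq1, hq2⟩ := abs_le.1 h01
  obtain ⟨hc1, hc2⟩ := abs_le.1 h10
  obtain ⟨hd1, hd2⟩ := abs_le.1 h11
  have hdpos : (9:ℝ)/10 ≤ d := by linarith
  have hd0 : d ≠ 0 := by intro h; rw [h] at hdpos; linarith
  -- key quantities
  set r2 : ℝ := c^2 + d^2 with hr2def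
  have hr2pos : (0:ℝ) < r2 := by positivity
  have hr2lb : (81:ℝ)/100 ≤ r2 := by nlinarith
  have hr2ub : |r2 - 1| ≤ 3 * δ := by
    rw [abs_le]; constructor <;> nlinarith
  set r : ℝ := Real.sqrt r2 with hrdef
  have hrpos : 0 < r := Real.sqrt_pos.2 hr2pos
  have hrsq : r^2 = r2 := Real.sq_sqrt hr2pos.le
  have hr0 : r ≠ 0 := hrpos.ne'
  set y : ℝ := -Real.log r2 with hydef
  set θ : ℝ := Real.arctan (-c/d) with hθdef
  set t : ℝ := (p*c + q*d)/r2 with htdef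
  clear_value r2
  -- exponential identities
  have hlog : Real.log r2 = 2 * Real.log r := by
    rw [← hrsq, sq, Real.log_mul hr0 hr0]; ring
  have hexp1 : Real.exp (y/2) = 1/r := by
    rw [hydef, hlog]
    rw [show -(2 * Real.log r)/2 = -Real.log r by ring, Real.exp_neg, Real.exp_log hrpos]
    rw [one_div]
  have hexp2 : Real.exp (-y/2) = r := by
    rw [hydef, hlog]
    rw [show -(-(2 * Real.log r))/2 = Real.log r by ring, Real.exp_log hrpos]
  -- trig identities
  have hsqrt_aux : Real.sqrt (1 + (-c/d)^2) = r / d := by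
    have : 1 + (-c/d)^2 = r2 / d^2 := by field_simp [hr2def]; linarith
    rw [this, Real.sqrt_div (by positivity : (0:ℝ) ≤ r2), Real.sqrt_sq (by linarith : (0:ℝ) ≤ d)]
  have hcos : Real.cos θ = d / r := by
    rw [hθdef, Real.cos_arctan, hsqrt_aux]
    rw [one_div_div]
  have hsin : Real.sin θ = -c / r := by
    rw [hθdef, Real.sin_arctan, hsqrt_aux]
    field_simp
  -- bounds
  have ht : |t| ≤ 4 * δ := by
    rw [htdef, abs_div, abs_of_pos hr2pos, div_le_iff₀ hr2pos]
    have hpa : |p| ≤ 11/10 := by rw [abs_le]; constructor <;> linarith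
    have hda : |d| ≤ 11/10 := by rw [abs_le]; constructor <;> linarith
    have e1 : |p*c| ≤ (11/10)*δ := by
      rw [abs_mul]; exact mul_le_mul hpa h10 (abs_nonneg c) (by norm_num)
    have e2 : |q*d| ≤ δ*(11/10) := by
      rw [abs_mul]; exact mul_le_mul h01 hda (abs_nonneg d) hδ0
    have h1 : |p*c + q*d| ≤ (22/10)*δ :=
      le_trans (abs_add_le _ _) (by linarith)
    have h2 : (22/10)*δ ≤ 4*δ*r2 := by nlinarith
    linarith
  have hy : |y| ≤ 4 * δ := by
    rw [hydef, abs_neg, abs_le]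
    obtain ⟨hu1, hu2⟩ := abs_le.1 hr2ub
    constructor
    · have h2 : Real.log (r2⁻¹) ≤ r2⁻¹ - 1 :=
        Real.log_le_sub_one_of_pos (by positivity)
      rw [Real.log_inv] at h2
      have h3 : r2⁻¹ - 1 = (1 - r2)/r2 := by field_simp
      rw [h3] at h2
      have h4 : (1 - r2)/r2 ≤ 4 * δ := by
        rw [div_le_iff₀ hr2pos]; nlinarith
      linarith
    · have h2 : Real.log r2 ≤ r2 - 1 := Real.log_le_sub_one_of_pos hr2pos
      linarith
  have hθb : |θ| ≤ 4 * δ := by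
    refine le_trans (abs_arctan_le _) ?_
    rw [abs_div, abs_of_pos (by linarith : (0:ℝ) < d), div_le_iff₀ (by linarith : (0:ℝ) < d)]
    rw [abs_neg]
    nlinarith
  refine ⟨t, y, θ, ht, hy, hθb, ?_⟩
  rw [hA, n, a, K]
  rw [Matrix.mul_fin_two, Matrix.mul_fin_two]
  rw [hexp1, hexp2, hcos, hsin]
  have hr2ne : r2 ≠ 0 := hr2pos.ne'
  have hrr : r^2 = c^2 + d^2 := by rw [hrsq, hr2def]
  have E1 : (1 * (1 / r) + t * 0) * (d / r) + (1 * 0 + t * r) * -(-c / r) = p := by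
    rw [htdef, hr2def]
    field_simp
    linear_combination (-r^2*d) * hdet' + (-d) * hrr
  have E2 : (1 * (1 / r) + t * 0) * (-c / r) + (1 * 0 + t * r) * (d / r) = q := by
    rw [htdef, hr2def]
    field_simp
    linear_combination (r^2*c) * hdet' + c * hrr
  have E3 : (0 * (1 / r) + 1 * 0) * (d / r) + (0 * 0 + 1 * r) * -(-c / r) = c := by
    field_simp
    ring
  have E4 : (0 * (1 / r) + 1 * 0) * (-c / r) + (0 * 0 + 1 * r) * (d / r) = d := by
    field_simp
    ring
  rw [E1, E2, E3, E4]
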